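/- Let (V,f) be a symplectic space over a field F of characteristic ≠ 2 and let 𝔰_f be the Lie algebra on S_f = span{v ⊗ f_v : v ∈ V} ⊆ V ⊗ V*. Then for every nonzero v ∈ V the element v ⊗ f_v is an extremal element of 𝔰_f: for all w ∈ V, [v⊗f_v, [v⊗f_v, w⊗f_w]] = 2 f(v,w)² (v⊗f_v). -/

import Mathlib

/-- The "pure tensor" `v ⊗ f_v`, viewed as the endomorphism `u ↦ f(v,u) • v` of `V`. -/
noncomputable def rk1 {F V : Type*} [Field F] [AddCommGroup V] [Module F V]
    (f : V →ₗ[F] V →ₗ[F] F) (v : V) : Module.End F V :=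
  (f v).smulRight v

/-- In the Lie algebra `𝔰_f` spanned by the tensors `v ⊗ f_v`, every
`v ⊗ f_v` (for `v ≠ 0`) is extremal: `⁅v⊗f_v, ⁅v⊗f_v, w⊗f_w⁆⁆ = 2 f(v,w)² • (v⊗f_v)`,
and hence `⁅v⊗f_v, ⁅v⊗f_v, y⁆⁆ ∈ F • (v⊗f_v)` for every `y ∈ 𝔰_f`. -/
theorem stmt3 {F V : Type*} [Field F] [AddCommGroup V] [Module F V]
    (h2 : (2 : F) ≠ 0)
    (f : V →ₗ[F] V →ₗ[F] F) (halt : ∀ v : V, f v v = 0)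
    (v : V) (hv : v ≠ 0) :
    (∀ w : V, ⁅rk1 f v, ⁅rk1 f v, rk1 f w⁆⁆ = (2 * f v w ^ 2) • rk1 f v) ∧
    ∀ y ∈ Submodule.span F (Set.range (rk1 f)),
      ∃ c : F, ⁅rk1 f v, ⁅rk1 f v, y⁆⁆ = c • rk1 f v := by
  have hskew : ∀ a b : V, f b a = - f a b := by
    intro a b
    have h := halt (a + b)
    simp only [map_add, LinearMap.add_apply, halt] at h
    linear_combination h
  have key : ∀ w : V, ⁅rk1 f v, ⁅rk1 f v, rk1 f w⁆⁆ = (2 * f v w ^ 2) • rk1 f v := by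
    intro w
    ext u
    simp only [Ring.lie_def, rk1, LinearMap.sub_apply, Module.End.mul_apply,
      LinearMap.smulRight_apply, LinearMap.smul_apply, map_smul, smul_smul, map_sub,
      smul_eq_mul, halt, mul_zero, zero_mul, zero_smul, sub_zero, smul_sub, map_zero]
    rw [hskew v w]
    module
  refine ⟨key, ?_⟩
  intro y hy
  induction hy using Submodule.span_induction with
  | mem x hx =>
    obtain ⟨w, rfl⟩ := hx
    exact ⟨2 * f v w ^ 2, key w⟩
  | zero => exact ⟨0, by simp only [Ring.lie_def]; simp⟩
  | add a b _ _ ha hb =>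
    obtain ⟨c, hc⟩ := ha; obtain ⟨d, hd⟩ := hb
    exact ⟨c + d, by rw [add_smul, ← hc, ← hd]; simp only [Ring.lie_def]; noncomm_ring⟩
  | smul t a _ ha =>
    obtain ⟨c, hc⟩ := ha
    exact ⟨t * c, by rw [mul_smul, ← hc]; simp only [Ring.lie_def, mul_sub, sub_mul, mul_smul_comm, smul_mul_assoc, smul_sub]⟩
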